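/- Let f : ℕ → [3,∞) be a non-decreasing function with lim_{r→∞} f(r) = ∞. Suppose G is a finite graph and ≺ is a linear order on V(G) such that col_{≺,r}(G) ≤ f(r) for every non-negative integer r. Then there exists l₀ such that for every positive integer N and every integer l ≥ l₀, the ordering ≺ can be extended to a linear order ≺' on V(G⁺(N,l)) such that col_{≺',r}(G⁺(N,l)) ≤ f(r) for every non-negative integer r. -/

import Mathlib

open MeasureTheory Set Pointwise Metric Function
open scoped RealInnerProductSpace ENNReal

noncomputable section

/-- `ℝ^d` as a Euclidean space. -/
abbrev Euc (d : ℕ) := EuclideanSpace ℝ (Fin d)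

/-- A shape: a compact set that is non-degenerate, i.e. not contained in a proper
affine subspace. -/
def IsShape {d : ℕ} (B : Set (Euc d)) : Prop :=
  IsCompact B ∧ affineSpan ℝ B = ⊤

/-- `B₁ ⊑ₛ B₂`: for every `x ∈ B₂` there is a translate `B₁'` of `B₁` with `x ∈ B₁'`
and `vol (B₁' ∩ B₂) ≥ vol B₁ / s`. -/
def SqIn {d : ℕ} (s : ℝ) (B₁ B₂ : Set (Euc d)) : Prop :=
  ∀ x ∈ B₂, ∃ v : Euc d, x ∈ v +ᵥ B₁ ∧
    volume B₁ / ENNReal.ofReal s ≤ volume ((v +ᵥ B₁) ∩ B₂)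

/-- `B₁` and `B₂` are `⊑ₛ`-comparable. -/
def SqComparable {d : ℕ} (s : ℝ) (B₁ B₂ : Set (Euc d)) : Prop :=
  SqIn s B₁ B₂ ∨ SqIn s B₂ B₁

/-- `B₁ ≤ₖ B₂`: some translate of `B₁` is contained in `k • B₂`. -/
def LeK {d : ℕ} (k : ℝ) (B₁ B₂ : Set (Euc d)) : Prop :=
  ∃ v : Euc d, v +ᵥ B₁ ⊆ k • B₂

/-- `B₁ ≤_{k,s} B₂`: for every `x ∈ k • B₂` there are a translate `B₁'` of `B₁` and a
translate `B₁''` of `s • B₁` with `x ∈ B₁''` and `B₁' ⊆ B₁'' ∩ k • B₂`. -/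
def LeKS {d : ℕ} (k s : ℝ) (B₁ B₂ : Set (Euc d)) : Prop :=
  ∀ x ∈ k • B₂, ∃ v w : Euc d,
    x ∈ w +ᵥ (s • B₁) ∧ v +ᵥ B₁ ⊆ (w +ᵥ (s • B₁)) ∩ (k • B₂)

/-- An intersection representation of a graph in `ℝ^d`. -/
def IsIntersectionRep {V : Type*} {d : ℕ} (G : SimpleGraph V) (φ : V → Set (Euc d)) : Prop :=
  (∀ v, (φ v).Nonempty) ∧ ∀ u v : V, u ≠ v → ((φ u ∩ φ v).Nonempty ↔ G.Adj u v)

/-- A representation is `c`-thin if every point lies in at most `c` of the sets. -/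
def IsThin {V : Type*} {d : ℕ} (c : ℝ) (φ : V → Set (Euc d)) : Prop :=
  ∀ x : Euc d, ({v : V | x ∈ φ v}.ncard : ℝ) ≤ c

/-- A `(c,⊑ₛ)`-tame representation. -/
def IsTame {V : Type*} {d : ℕ} (c s : ℝ) (G : SimpleGraph V) (φ : V → Set (Euc d)) : Prop :=
  IsIntersectionRep G φ ∧ IsThin c φ ∧
    (∀ v, Convex ℝ (φ v) ∧ IsShape (φ v)) ∧
    ∀ u v : V, SqComparable s (φ u) (φ v)

/-- An `S`-shaped representation: each vertex is assigned a translate of a shape in `S`. -/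
def IsSShaped {V : Type*} {d : ℕ} (S : Set (Set (Euc d))) (φ : V → Set (Euc d)) : Prop :=
  ∀ v, ∃ B ∈ S, ∃ t : Euc d, φ v = t +ᵥ B

/-- `X` is a balanced separator: every component of `G - X` has at most `(2/3)|V(G)|`
vertices. -/
def IsBalancedSeparator {V : Type*} [Fintype V] (G : SimpleGraph V) (X : Set V) : Prop :=
  ∀ C : (G.induce Xᶜ).ConnectedComponent,
    (C.supp.ncard : ℝ) ≤ 2 / 3 * Fintype.card V

/-- `L_{G,≺,r}(v)`, where the linear ordering `≺` is encoded by an injective `ρ : V → ℕ`: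
the set of vertices `x ⪯ v` reachable from `v` by a path of length at most `r` all of whose
internal vertices are `≻ v`. -/
def Lset {V : Type*} (G : SimpleGraph V) (ρ : V → ℕ) (r : ℕ) (v : V) : Set V :=
  {x | ρ x ≤ ρ v ∧ ∃ p : G.Walk v x, p.IsPath ∧ p.length ≤ r ∧
    ∀ z ∈ p.support, z ≠ v → z ≠ x → ρ v < ρ z}

/-- The height of a set: the least `h ≥ 0` such that the set lies between two parallel
hyperplanes at distance `h`. -/
def heightOf {d : ℕ} (B : Set (Euc d)) : ℝ :=
  sInf {h : ℝ | 0 ≤ h ∧ ∃ u : Euc d, ‖u‖ = 1 ∧ ∃ a : ℝ,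
    ∀ x ∈ B, a ≤ (inner ℝ u x : ℝ) ∧ (inner ℝ u x : ℝ) ≤ a + h}

/-- A parallelepiped with center `p` and sides `v₁, …, v_d`. -/
def IsParallelepiped {d : ℕ} (T : Set (Euc d)) : Prop :=
  ∃ (p : Euc d) (v : Fin d → Euc d), LinearIndependent ℝ v ∧
    T = {x | ∃ α : Fin d → ℝ, (∀ i, α i ∈ Set.Icc (-1 : ℝ) 1) ∧ x = p + ∑ i, α i • v i}

/-- `T` is an envelope of `B`: a parallelepiped of smallest volume containing `B`. -/
def IsEnvelope {d : ℕ} (T B : Set (Euc d)) : Prop :=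
  IsParallelepiped T ∧ B ⊆ T ∧
    ∀ T' : Set (Euc d), IsParallelepiped T' → B ⊆ T' → volume T ≤ volume T'

/-- A box in `ℝ^d`: a product of `d` closed intervals. -/
def IsBox {d : ℕ} (B : Set (Euc d)) : Prop :=
  ∃ a b : Fin d → ℝ, B = {x : Euc d | ∀ i, x i ∈ Set.Icc (a i) (b i)}

/-- `Q` is `k'`-fat: every ball `B` centered in `Q` satisfies
`vol (B ∩ Q) ≥ min (vol B / k') (vol Q)`. -/
def IsFat {d : ℕ} (k' : ℝ) (Q : Set (Euc d)) : Prop :=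
  ∀ x ∈ Q, ∀ ρ : ℝ, 0 < ρ →
    min (volume (Metric.closedBall x ρ) / ENNReal.ofReal k') (volume Q)
      ≤ volume (Metric.closedBall x ρ ∩ Q)

/-- The strong product of two simple graphs. -/
def strongProd {α β : Type*} (G : SimpleGraph α) (H : SimpleGraph β) :
    SimpleGraph (α × β) where
  Adj x y := x ≠ y ∧ (x.1 = y.1 ∨ G.Adj x.1 y.1) ∧ (x.2 = y.2 ∨ H.Adj x.2 y.2)
  symm := by
    constructor
    rintro ⟨a1, a2⟩ ⟨b1, b2⟩ ⟨hne, h1, h2⟩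
    refine ⟨hne.symm, ?_, ?_⟩
    · rcases h1 with h | h
      · exact Or.inl h.symm
      · exact Or.inr h.symm
    · rcases h2 with h | h
      · exact Or.inl h.symm
      · exact Or.inr h.symm
  loopless := by
    constructor
    rintro ⟨a1, a2⟩ ⟨hne, -, -⟩
    exact hne rfl

/-- The graph `G⁺(N, l)`: add hubs `v₁, …, v_N` and internally disjoint paths of length `l`
from each hub to each vertex of `G`.  The internal vertices of the path from hub `i` to
vertex `u` are `(i, u, 0), …, (i, u, l-2)`. -/
def plusGraph {V : Type*} (G : SimpleGraph V) (N l : ℕ) :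
    SimpleGraph (V ⊕ (Fin N ⊕ Fin N × V × Fin (l - 1))) :=
  SimpleGraph.fromRel (fun x y =>
    match x, y with
    | Sum.inl u, Sum.inl w => G.Adj u w
    | Sum.inr (Sum.inl _), Sum.inl _ => l = 1
    | Sum.inr (Sum.inl i), Sum.inr (Sum.inr (j, _, t)) => i = j ∧ (t : ℕ) = 0
    | Sum.inr (Sum.inr (i, u, t)), Sum.inr (Sum.inr (j, w, t')) =>
        i = j ∧ u = w ∧ (t' : ℕ) = (t : ℕ) + 1
    | Sum.inr (Sum.inr (_, u, t)), Sum.inl w => u = w ∧ (t : ℕ) = l - 2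
    | _, _ => False)

/-- `γ_d`: the supremum over affine hyperplanes `H` of the `(d-1)`-dimensional Hausdorff
measure of the intersection of `H` with the unit cube. -/
def gammaConst (d : ℕ) : ℝ :=
  sSup {γ : ℝ | ∃ (u : Euc d) (a : ℝ), ‖u‖ = 1 ∧
    γ = (MeasureTheory.Measure.hausdorffMeasure ((d : ℝ) - 1)
      ({x : Euc d | (inner ℝ u x : ℝ) = a} ∩ {x : Euc d | ∀ i, x i ∈ Set.Icc (0 : ℝ) 1})).toReal}

/-- The sequence `ℓ_h`: `ℓ_1 = 1` and `ℓ_{h+1} = ℓ_h / (2(h+1))`. -/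
def ellSeq : ℕ → ℝ
  | 0 => 2
  | n + 1 => ellSeq n / (2 * (n + 1))

/-- The trapezoid `T_h` with vertices `(0,0)`, `(ℓ_h,0)`, `(ℓ_h, hℓ_h)`, `(0, 2hℓ_h)`. -/
def trapezoidShape (h : ℕ) : Set (Euc 2) :=
  convexHull ℝ {(WithLp.toLp 2 ![0, 0] : Euc 2), WithLp.toLp 2 ![ellSeq h, 0], WithLp.toLp 2 ![ellSeq h, h * ellSeq h],
    WithLp.toLp 2 ![0, 2 * h * ellSeq h]}

/-- An axis-aligned square `S_h` with sides of length `ℓ_h`. -/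
def squareShape (h : ℕ) : Set (Euc 2) :=
  {x : Euc 2 | x 0 ∈ Set.Icc 0 (ellSeq h) ∧ x 1 ∈ Set.Icc 0 (ellSeq h)}

/-- The set `S*` of shapes. -/
def SStar : Set (Set (Euc 2)) :=
  {B | ∃ h : ℕ, 0 < h ∧ (B = trapezoidShape h ∨ B = squareShape h)}

/-- A class of finite graphs is `⊑`-representable. -/
def SqRepresentable (𝒢 : ∀ V : Type, Fintype V → SimpleGraph V → Prop) : Prop :=
  ∃ d c s : ℕ, 0 < d ∧ 0 < c ∧ 0 < s ∧
    ∀ (V : Type) (instV : Fintype V) (G : SimpleGraph V), 𝒢 V instV G →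
      ∃ S : Set (Set (Euc d)), (∀ B ∈ S, Convex ℝ B ∧ IsShape B) ∧
        S.Pairwise (SqComparable (s : ℝ)) ∧
        ∃ φ : V → Set (Euc d), IsIntersectionRep G φ ∧ IsThin (c : ℝ) φ ∧ IsSShaped S φ

end

/- auxiliary lemmas -/
namespace Stmt17Aux
abbrev PW (V : Type) (N l : ℕ) := V ⊕ (Fin N ⊕ Fin N × V × Fin (l - 1))
abbrev chv {V : Type} {N l : ℕ} (i : Fin N) (u : V) (t : Fin (l-1)) : PW V N l :=
  Sum.inr (Sum.inr (i, u, t))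
abbrev hubv {V : Type} {N l : ℕ} (i : Fin N) : PW V N l := Sum.inr (Sum.inl i)

variable {V : Type} {G : SimpleGraph V} {N l : ℕ}

lemma adj_ll {u w : V} : (plusGraph G N l).Adj (Sum.inl u) (Sum.inl w) ↔ G.Adj u w := by
  simp only [plusGraph, SimpleGraph.fromRel_adj]
  constructor
  · rintro ⟨-, h | h⟩; exact h; exact h.symm
  · exact fun h => ⟨fun he => G.irrefl (Sum.inl.inj he ▸ h), Or.inl h⟩

lemma adj_lh (hl : 2 ≤ l) {u : V} {i : Fin N} :
    ¬ (plusGraph G N l).Adj (Sum.inl u) (hubv i) := by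
  simp only [plusGraph, SimpleGraph.fromRel_adj]
  rintro ⟨-, h | h⟩; exact h; omega

lemma adj_lc {u w : V} {i : Fin N} {t : Fin (l-1)} :
    (plusGraph G N l).Adj (Sum.inl u) (chv i w t) ↔ (w = u ∧ (t:ℕ) = l - 2) := by
  simp only [plusGraph, SimpleGraph.fromRel_adj]
  constructor
  · rintro ⟨-, h | h⟩; exact h.elim; exact h
  · exact fun h => ⟨by simp, Or.inr h⟩

lemma adj_hh {i j : Fin N} : ¬ (plusGraph G N l).Adj (hubv i) (hubv j : PW V N l) := by
  simp only [plusGraph, SimpleGraph.fromRel_adj]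
  rintro ⟨-, h | h⟩ <;> exact h

lemma adj_hc {i j : Fin N} {w : V} {t : Fin (l-1)} :
    (plusGraph G N l).Adj (hubv i) (chv j w t) ↔ (i = j ∧ (t:ℕ) = 0) := by
  simp only [plusGraph, SimpleGraph.fromRel_adj]
  constructor
  · rintro ⟨-, h | h⟩; exact h; exact h.elim
  · exact fun h => ⟨by simp, Or.inl h⟩

lemma adj_cc {i j : Fin N} {u w : V} {t t' : Fin (l-1)} :
    (plusGraph G N l).Adj (chv i u t) (chv j w t') ↔
      (i = j ∧ u = w ∧ ((t':ℕ) = (t:ℕ) + 1 ∨ (t:ℕ) = (t':ℕ) + 1)) := by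
  simp only [plusGraph, SimpleGraph.fromRel_adj]
  constructor
  · rintro ⟨-, ⟨h1, h2, h3⟩ | ⟨h1, h2, h3⟩⟩
    · exact ⟨h1, h2, Or.inl h3⟩
    · exact ⟨h1.symm, h2.symm, Or.inr h3⟩
  · rintro ⟨rfl, rfl, h3 | h3⟩
    · refine ⟨?_, Or.inl ⟨rfl, rfl, h3⟩⟩
      simp only [ne_eq, Sum.inr.injEq, Prod.mk.injEq, true_and]
      rintro ⟨-, -, rfl⟩; omega
    · refine ⟨?_, Or.inr ⟨rfl, rfl, h3⟩⟩
      simp only [ne_eq, Sum.inr.injEq, Prod.mk.injEq, true_and]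
      rintro ⟨-, -, rfl⟩; omega

/-- distance-to-`inl` potential -/
def hfun (V : Type) (N l : ℕ) : PW V N l → ℕ
  | Sum.inl _ => 0
  | Sum.inr (Sum.inl _) => l
  | Sum.inr (Sum.inr (_, _, t)) => min (l - 1 - (t:ℕ)) ((t:ℕ) + 1 + l)

lemma hfun_lip (hl : 2 ≤ l) {x y : PW V N l} (h : (plusGraph G N l).Adj x y) :
    hfun V N l x ≤ hfun V N l y + 1 := by
  rcases x with u | i | ⟨i, u, t⟩ <;> rcases y with w | j | ⟨j, w, t'⟩
  · simp [hfun]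
  · exact absurd h (adj_lh hl)
  · obtain ⟨rfl, ht⟩ := adj_lc.mp h; simp [hfun]
  · exact absurd h.symm (adj_lh hl)
  · exact absurd h adj_hh
  · obtain ⟨rfl, ht⟩ := adj_hc.mp h
    have := t'.isLt; simp only [hfun]; omega
  · obtain ⟨rfl, ht⟩ := adj_lc.mp h.symm
    have := t.isLt; simp only [hfun]; omega
  · obtain ⟨rfl, ht⟩ := adj_hc.mp h.symm
    have := t.isLt; simp only [hfun]; omega
  · obtain ⟨rfl, rfl, ht⟩ := adj_cc.mp h
    have := t.isLt; have := t'.isLt; simp only [hfun]; omega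

lemma hfun_walk (hl : 2 ≤ l) {x y : PW V N l} (p : (plusGraph G N l).Walk x y) :
    hfun V N l x ≤ hfun V N l y + p.length := by
  induction p with
  | nil => simp
  | cons h q ih =>
      have h1 := hfun_lip hl h
      rw [SimpleGraph.Walk.length_cons]
      omega

lemma hub_inl_length (hl : 2 ≤ l) {i : Fin N} {b : V}
    (p : (plusGraph G N l).Walk (hubv i) (Sum.inl b)) : l ≤ p.length := by
  have := hfun_walk hl p; simpa [hfun] using this

lemma inl_hub_length (hl : 2 ≤ l) {i : Fin N} {b : V}
    (p : (plusGraph G N l).Walk (Sum.inl b) (hubv i)) : l ≤ p.length := by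
  have := hfun_walk hl p.reverse
  simpa [hfun] using this


section Walks
variable {ρ' : PW V N l → ℕ}

lemma mem_cons_support {a b x z : PW V N l} {h : (plusGraph G N l).Adj a b}
    {q : (plusGraph G N l).Walk b x} (hz : z ∈ q.support) :
    z ∈ (SimpleGraph.Walk.cons h q).support := by
  rw [SimpleGraph.Walk.support_cons]; exact List.mem_cons_of_mem _ hz

lemma auxChain
    (h3 : ∀ (j j' : Fin N) (w : V) (s' : Fin (l-1)), ρ' (hubv j) < ρ' (chv j' w s'))
    (h4 : ∀ (i : Fin N) (u : V) (t₁ t₂ : Fin (l-1)),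
      ρ' (chv i u t₁) < ρ' (chv i u t₂) ↔ (t₂:ℕ) < (t₁:ℕ))
    {i : Fin N} {u : V} {t : Fin (l-1)} :
    ∀ {a x : PW V N l} (q : (plusGraph G N l).Walk a x) (s : Fin (l-1)), a = chv i u s →
      (s:ℕ) < (t:ℕ) → (∀ z ∈ q.support, z ≠ x → ρ' (chv i u t) < ρ' z) →
      x = hubv i ∨ ∃ s' : Fin (l-1), x = chv i u s' ∧ (s':ℕ) ≤ (t:ℕ) := by
  intro a x q
  induction q with
  | nil => rintro s rfl hst _; exact Or.inr ⟨s, rfl, le_of_lt hst⟩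
  | @cons a b x h q ih =>
      rintro s rfl hst hint
      have hbmem : b ∈ (SimpleGraph.Walk.cons h q).support :=
        mem_cons_support q.start_mem_support
      rcases b with b' | j | ⟨j, w, s'⟩
      · obtain ⟨rfl, hs⟩ := adj_lc.mp h.symm
        have := t.isLt; omega
      · obtain ⟨rfl, -⟩ := adj_hc.mp h.symm
        by_cases hbx : (hubv j : PW V N l) = x
        · exact Or.inl hbx.symm
        · exact absurd (hint _ hbmem hbx) (not_lt.mpr (h3 _ _ _ _).le)
      · obtain ⟨rfl, rfl, hadj⟩ := adj_cc.mp h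
        by_cases hbx : (chv i u s' : PW V N l) = x
        · exact Or.inr ⟨s', hbx.symm, by omega⟩
        · have hlt : (s':ℕ) < (t:ℕ) := (h4 i u t s').mp (hint _ hbmem hbx)
          exact ih s' rfl hlt (fun z hz hzx => hint z (mem_cons_support hz) hzx)

lemma caseChain (hl : 2 ≤ l)
    (h2 : ∀ (u : V) (j : Fin N) (w : V) (s : Fin (l-1)), ρ' (Sum.inl u) < ρ' (chv j w s))
    (h3 : ∀ (j j' : Fin N) (w : V) (s' : Fin (l-1)), ρ' (hubv j) < ρ' (chv j' w s'))
    (h4 : ∀ (i : Fin N) (u : V) (t₁ t₂ : Fin (l-1)),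
      ρ' (chv i u t₁) < ρ' (chv i u t₂) ↔ (t₂:ℕ) < (t₁:ℕ))
    {i : Fin N} {u : V} {t : Fin (l-1)} {x : PW V N l}
    (p : (plusGraph G N l).Walk (chv i u t) x) (hp : p.IsPath)
    (hint : ∀ z ∈ p.support, z ≠ chv i u t → z ≠ x → ρ' (chv i u t) < ρ' z)
    (hx : ρ' x ≤ ρ' (chv i u t)) :
    x = chv i u t ∨ x = hubv i ∨ ((t:ℕ) = l - 2 ∧ x = Sum.inl u) ∨
      (∃ t' : Fin (l-1), (t':ℕ) = (t:ℕ) + 1 ∧ x = chv i u t') := by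
  cases p with
  | nil => exact Or.inl rfl
  | @cons _ b _ h q =>
      have hnodup : ((chv i u t : PW V N l) :: q.support).Nodup := by
        have := hp.support_nodup; rwa [SimpleGraph.Walk.support_cons] at this
      have hvq : (chv i u t : PW V N l) ∉ q.support := (List.nodup_cons.mp hnodup).1
      have hbmem : b ∈ (SimpleGraph.Walk.cons h q).support :=
        mem_cons_support q.start_mem_support
      have hqint : ∀ z ∈ q.support, z ≠ x → ρ' (chv i u t) < ρ' z := fun z hz hzx =>
        hint z (mem_cons_support hz) (fun he => hvq (he ▸ hz)) hzx
      rcases b with b' | j | ⟨j, w, t''⟩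
      · obtain ⟨rfl, hs⟩ := adj_lc.mp h.symm
        by_cases hbx : (Sum.inl u : PW V N l) = x
        · exact Or.inr (Or.inr (Or.inl ⟨hs, hbx.symm⟩))
        · exact absurd (hint _ hbmem (by simp [chv]) hbx) (by have := h2 u i u t; omega)
      · obtain ⟨rfl, -⟩ := adj_hc.mp h.symm
        by_cases hbx : (hubv j : PW V N l) = x
        · exact Or.inr (Or.inl hbx.symm)
        · exact absurd (hint _ hbmem (by simp [chv, hubv]) hbx) (not_lt.mpr (h3 _ _ _ _).le)
      · obtain ⟨rfl, rfl, hadj⟩ := adj_cc.mp h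
        rcases hadj with hup | hdown
        · by_cases hbx : (chv i u t'' : PW V N l) = x
          · exact Or.inr (Or.inr (Or.inr ⟨t'', hup, hbx.symm⟩))
          · have := (h4 i u t t'').mp (hqint _ q.start_mem_support hbx)
            omega
        · by_cases hbx : (chv i u t'' : PW V N l) = x
          · subst hbx
            have := (h4 i u t t'').mpr (by omega)
            omega
          · have hlt : (t'':ℕ) < (t:ℕ) := by omega
            rcases auxChain h3 h4 q t'' rfl hlt hqint with hh | ⟨s', rfl, hs'⟩
            · exact Or.inr (Or.inl hh)
            · have hge : (t:ℕ) ≤ (s':ℕ) := by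
                by_contra hcon
                have := (h4 i u t s').mpr (by omega); omega
              have : s' = t := Fin.ext (by omega)
              subst this
              exact absurd q.end_mem_support hvq

lemma auxHub
    (h1 : ∀ (u : V) (j : Fin N), ρ' (Sum.inl u) < ρ' (hubv j))
    {i : Fin N} :
    ∀ {a x : PW V N l} (q : (plusGraph G N l).Walk a x),
      (∃ u s, a = chv i u s) →
      (∀ z ∈ q.support, z ≠ x → ρ' (hubv i) < ρ' z) →
      (∃ b, x = Sum.inl b) ∨ x = hubv i ∨ (∃ (j : Fin N) (w : V) (s' : Fin (l-1)), x = chv j w s') := by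
  intro a x q
  induction q with
  | nil => rintro ⟨u, s, rfl⟩ _; exact Or.inr (Or.inr ⟨i, u, s, rfl⟩)
  | @cons a b x h q ih =>
      rintro ⟨u, s, rfl⟩ hint
      have hbmem : b ∈ (SimpleGraph.Walk.cons h q).support :=
        mem_cons_support q.start_mem_support
      rcases b with b' | j | ⟨j, w, s'⟩
      · obtain ⟨rfl, -⟩ := adj_lc.mp h.symm
        by_cases hbx : (Sum.inl u : PW V N l) = x
        · exact Or.inl ⟨u, hbx.symm⟩
        · exact absurd (hint _ hbmem hbx) (by have := h1 u i; omega)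
      · obtain ⟨rfl, -⟩ := adj_hc.mp h.symm
        by_cases hbx : (hubv j : PW V N l) = x
        · exact Or.inr (Or.inl hbx.symm)
        · exact absurd (hint _ hbmem hbx) (lt_irrefl _)
      · obtain ⟨rfl, rfl, -⟩ := adj_cc.mp h
        exact ih ⟨u, s', rfl⟩ (fun z hz hzx => hint z (mem_cons_support hz) hzx)

lemma caseHub (hl : 2 ≤ l)
    (h1 : ∀ (u : V) (j : Fin N), ρ' (Sum.inl u) < ρ' (hubv j))
    (h3 : ∀ (j j' : Fin N) (w : V) (s' : Fin (l-1)), ρ' (hubv j) < ρ' (chv j' w s'))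
    {i : Fin N} {x : PW V N l}
    (p : (plusGraph G N l).Walk (hubv i) x) (hp : p.IsPath)
    (hint : ∀ z ∈ p.support, z ≠ hubv i → z ≠ x → ρ' (hubv i) < ρ' z)
    (hx : ρ' x ≤ ρ' (hubv i)) :
    x = hubv i ∨ ∃ b, x = Sum.inl b := by
  cases p with
  | nil => exact Or.inl rfl
  | @cons _ b _ h q =>
      have hnodup : ((hubv i : PW V N l) :: q.support).Nodup := by
        have := hp.support_nodup; rwa [SimpleGraph.Walk.support_cons] at this
      have hvq : (hubv i : PW V N l) ∉ q.support := (List.nodup_cons.mp hnodup).1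
      have hqint : ∀ z ∈ q.support, z ≠ x → ρ' (hubv i) < ρ' z := fun z hz hzx =>
        hint z (mem_cons_support hz) (fun he => hvq (he ▸ hz)) hzx
      rcases b with b' | j | ⟨j, w, s⟩
      · exact absurd h.symm (adj_lh hl)
      · exact absurd h adj_hh
      · obtain ⟨rfl, -⟩ := adj_hc.mp h
        rcases auxHub h1 q ⟨w, s, rfl⟩ hqint with ⟨b, rfl⟩ | hh | ⟨j', w', s', rfl⟩
        · exact Or.inr ⟨b, rfl⟩
        · subst hh; exact absurd q.end_mem_support hvq
        · exact absurd hx (by have := h3 i j' w' s'; omega)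


lemma chainConfNoHub {i : Fin N} {u : V} :
    ∀ {a x : PW V N l} (q : (plusGraph G N l).Walk a x),
      (∃ s, a = chv i u s) → (∀ j : Fin N, (hubv j : PW V N l) ∉ q.support) →
      (Sum.inl u : PW V N l) ∈ q.support ∨ ∃ s', x = chv i u s' := by
  intro a x q
  induction q with
  | nil => rintro ⟨s, rfl⟩ _; exact Or.inr ⟨s, rfl⟩
  | @cons a b x h q ih =>
      rintro ⟨s, rfl⟩ hnh
      rcases b with b' | j | ⟨j, w, s'⟩
      · obtain ⟨rfl, -⟩ := adj_lc.mp h.symm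
        exact Or.inl (mem_cons_support q.start_mem_support)
      · exact absurd (mem_cons_support q.start_mem_support) (hnh j)
      · obtain ⟨rfl, rfl, -⟩ := adj_cc.mp h
        rcases ih ⟨s', rfl⟩ (fun j hj => hnh j (mem_cons_support hj)) with hm | hr
        · exact Or.inl (mem_cons_support hm)
        · exact Or.inr hr

lemma allInl :
    ∀ {a x : PW V N l} (p : (plusGraph G N l).Walk a x),
      (∀ j : Fin N, (hubv j : PW V N l) ∉ p.support) → p.support.Nodup →
      (∃ c, a = Sum.inl c) → (∃ b, x = Sum.inl b) →
      ∀ z ∈ p.support, ∃ e, z = Sum.inl e := by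
  intro a x p
  induction p with
  | nil =>
      rintro _ _ ⟨c, rfl⟩ _ z hz
      rw [SimpleGraph.Walk.support_nil] at hz
      exact ⟨c, by simpa using hz⟩
  | @cons a b x h q ih =>
      rintro hnh hnodup ⟨c, rfl⟩ hx z hz
      rw [SimpleGraph.Walk.support_cons] at hz hnodup
      have hnh' : ∀ j : Fin N, (hubv j : PW V N l) ∉ q.support :=
        fun j hj => hnh j (mem_cons_support hj)
      rcases List.mem_cons.mp hz with rfl | hz'
      · exact ⟨c, rfl⟩
      rcases b with b' | j | ⟨j, w, s⟩
      · exact ih hnh' (List.nodup_cons.mp hnodup).2 ⟨b', rfl⟩ hx z hz'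
      · exact absurd (mem_cons_support q.start_mem_support) (hnh j)
      · obtain ⟨rfl, -⟩ := adj_lc.mp h
        rcases chainConfNoHub q ⟨s, rfl⟩ hnh' with hm | ⟨s', hs'⟩
        · exact absurd hm (List.nodup_cons.mp hnodup).1
        · obtain ⟨b, rfl⟩ := hx
          exact absurd hs' (by simp [chv])

lemma projWalk :
    ∀ {a x : PW V N l} (p : (plusGraph G N l).Walk a x),
      (∀ z ∈ p.support, ∃ e, z = Sum.inl e) →
      ∀ c b, a = Sum.inl c → x = Sum.inl b →
      ∃ q : G.Walk c b, q.length = p.length ∧ q.support.map Sum.inl = p.support := by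
  intro a x p
  induction p with
  | nil =>
      rintro _ c b rfl hcb
      obtain rfl : c = b := Sum.inl.inj hcb
      exact ⟨SimpleGraph.Walk.nil, by simp, by simp⟩
  | @cons a y x h q ih =>
      rintro hall c b rfl rfl
      obtain ⟨e, rfl⟩ : ∃ e, y = Sum.inl e :=
        hall y (mem_cons_support q.start_mem_support)
      have hadj : G.Adj c e := adj_ll.mp h
      obtain ⟨q', hq'len, hq'sup⟩ :=
        ih (fun z hz => hall z (mem_cons_support hz)) e b rfl rfl
      refine ⟨SimpleGraph.Walk.cons hadj q', by simp [hq'len], ?_⟩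
      rw [SimpleGraph.Walk.support_cons, SimpleGraph.Walk.support_cons, List.map_cons, hq'sup]


lemma caseInl (hl : 2 ≤ l) {ρ : V → ℕ} (hρ'l : ∀ u : V, ρ' (Sum.inl u) = ρ u)
    {a b : V} (p : (plusGraph G N l).Walk (Sum.inl a) (Sum.inl b)) (hp : p.IsPath)
    (hlen : p.length < 2 * l)
    (hint : ∀ z ∈ p.support, z ≠ Sum.inl a → z ≠ Sum.inl b → ρ' (Sum.inl a) < ρ' z) :
    ∃ q : G.Walk a b, q.IsPath ∧ q.length ≤ p.length ∧
      ∀ z ∈ q.support, z ≠ a → z ≠ b → ρ a < ρ z := by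
  classical
  have hnh : ∀ j : Fin N, (hubv j : PW V N l) ∉ p.support := by
    intro j hj
    have hsplit := congrArg SimpleGraph.Walk.length (p.take_spec hj)
    rw [SimpleGraph.Walk.length_append] at hsplit
    have h1 := inl_hub_length hl (p.takeUntil (hubv j) hj)
    have h2 := hub_inl_length hl (p.dropUntil (hubv j) hj)
    omega
  have hall := allInl p hnh hp.support_nodup ⟨a, rfl⟩ ⟨b, rfl⟩
  obtain ⟨q, hqlen, hqsup⟩ := projWalk p hall a b rfl rfl
  refine ⟨q, ?_, le_of_eq hqlen, ?_⟩
  · rw [SimpleGraph.Walk.isPath_def]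
    have := hp.support_nodup
    rw [← hqsup] at this
    exact this.of_map
  · intro z hz hza hzb
    have hmem : (Sum.inl z : PW V N l) ∈ p.support := by
      rw [← hqsup]; exact List.mem_map_of_mem hz
    have := hint _ hmem (by simpa using hza) (by simpa using hzb)
    rwa [hρ'l, hρ'l] at this

end Walks

lemma div_helper {l : ℕ} {c₁ c₂ r₁ r₂ : ℕ} (h₁ : r₁ < l) (h₂ : r₂ < l)
    (h : c₁ * l + r₁ = c₂ * l + r₂) : c₁ = c₂ ∧ r₁ = r₂ := by
  have hl0 : 0 < l := by omega
  have e₁ : (c₁ * l + r₁) / l = c₁ := by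
    rw [mul_comm, Nat.mul_add_div hl0, Nat.div_eq_of_lt h₁, add_zero]
  have e₂ : (c₂ * l + r₂) / l = c₂ := by
    rw [mul_comm, Nat.mul_add_div hl0, Nat.div_eq_of_lt h₂, add_zero]
  have hc : c₁ = c₂ := by rw [← e₁, ← e₂, h]
  refine ⟨hc, ?_⟩
  subst hc; omega

lemma ncard_range_inl [Fintype V] :
    (Set.range (Sum.inl : V → PW V N l)).ncard = Fintype.card V := by
  rw [← Set.image_univ, Set.ncard_image_of_injective _ Sum.inl_injective,
    Set.ncard_univ, Nat.card_eq_fintype_card]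

end Stmt17Aux

theorem stmt17 (f : ℕ → ℝ) (hf3 : ∀ r, 3 ≤ f r) (hmono : Monotone f)
    (hlim : Filter.Tendsto f Filter.atTop Filter.atTop)
    (V : Type) [Fintype V] (G : SimpleGraph V) (ρ : V → ℕ)
    (hρ : Function.Injective ρ)
    (hcol : ∀ r : ℕ, ∀ v : V, ((Lset G ρ r v).ncard : ℝ) ≤ f r) :
    ∃ l₀ : ℕ, ∀ N l : ℕ, 0 < N → 0 < l → l₀ ≤ l →
      ∃ ρ' : (V ⊕ (Fin N ⊕ Fin N × V × Fin (l - 1))) → ℕ,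
        Function.Injective ρ' ∧
        (∀ u w : V, ρ' (Sum.inl u) < ρ' (Sum.inl w) ↔ ρ u < ρ w) ∧
        ∀ r : ℕ, ∀ v, ((Lset (plusGraph G N l) ρ' r v).ncard : ℝ) ≤ f r := by
  classical
  open Stmt17Aux in
  obtain ⟨n₀, hn₀⟩ : ∃ n₀ : ℕ, ∀ m, n₀ ≤ m → ((Fintype.card V : ℝ) + 1) ≤ f m :=
    Filter.eventually_atTop.mp (Filter.tendsto_atTop.mp hlim ((Fintype.card V : ℝ) + 1))
  refine ⟨max 2 n₀, ?_⟩
  intro N l hN hl0 hll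
  have hl : 2 ≤ l := le_trans (le_max_left _ _) hll
  have hn₀l : n₀ ≤ l := le_trans (le_max_right _ _) hll
  set M : ℕ := (Finset.univ.sup ρ) + 1 with hM_def
  have hM : ∀ u : V, ρ u < M := fun u => by
    have := Finset.le_sup (f := ρ) (Finset.mem_univ u); omega
  set K : ℕ := Fintype.card V with hK_def
  let e : V ≃ Fin K := Fintype.equivFin V
  set ρ' : PW V N l → ℕ := Sum.elim ρ (Sum.elim (fun i : Fin N => M + (i : ℕ))
    (fun z : Fin N × V × Fin (l-1) =>
      M + N + (((z.1 : ℕ) * K + (e z.2.1 : ℕ)) * l + (l - 2 - (z.2.2 : ℕ))))) with hρ'def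
  have hρ'l : ∀ u : V, ρ' (Sum.inl u) = ρ u := fun u => rfl
  have hρ'h : ∀ i : Fin N, ρ' (hubv i) = M + (i : ℕ) := fun i => rfl
  have hρ'c : ∀ (i : Fin N) (u : V) (t : Fin (l-1)),
      ρ' (chv i u t) = M + N + (((i : ℕ) * K + (e u : ℕ)) * l + (l - 2 - (t : ℕ))) :=
    fun i u t => rfl
  have h1 : ∀ (u : V) (j : Fin N), ρ' (Sum.inl u) < ρ' (hubv j) := fun u j => by
    simp only [hρ'def, hubv, Sum.elim_inl, Sum.elim_inr]; have := hM u; omega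
  have h2 : ∀ (u : V) (j : Fin N) (w : V) (s : Fin (l-1)), ρ' (Sum.inl u) < ρ' (chv j w s) :=
    fun u j w s => by
      simp only [hρ'def, chv, Sum.elim_inl, Sum.elim_inr]; have := hM u; omega
  have h3 : ∀ (j j' : Fin N) (w : V) (s' : Fin (l-1)), ρ' (hubv j) < ρ' (chv j' w s') :=
    fun j j' w s' => by
      simp only [hρ'def, hubv, chv, Sum.elim_inl, Sum.elim_inr]; have := j.isLt; omega
  have h4 : ∀ (i : Fin N) (u : V) (t₁ t₂ : Fin (l-1)),
      ρ' (chv i u t₁) < ρ' (chv i u t₂) ↔ (t₂ : ℕ) < (t₁ : ℕ) := fun i u t₁ t₂ => by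
    simp only [hρ'def, chv, Sum.elim_inl, Sum.elim_inr]
    have := t₁.isLt; have := t₂.isLt; omega
  refine ⟨ρ', ?_, fun u w => Iff.rfl, ?_⟩
  · -- injectivity
    rintro (u | i | ⟨i, u, t⟩) (w | j | ⟨j, w, t'⟩) h <;>
      simp only [hρ'def, Sum.elim_inl, Sum.elim_inr] at h
    · exact congrArg Sum.inl (hρ h)
    · exact absurd h (by have := hM u; omega)
    · exact absurd h (by have := hM u; omega)
    · exact absurd h (by have := hM w; omega)
    · have : (i : ℕ) = (j : ℕ) := by omega
      exact congrArg _ (congrArg _ (Fin.ext this))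
    · exact absurd h (by have := i.isLt; omega)
    · exact absurd h (by have := hM w; omega)
    · exact absurd h (by have := j.isLt; omega)
    · have hh : ((i:ℕ) * K + (e u : ℕ)) * l + (l - 2 - (t:ℕ))
          = ((j:ℕ) * K + (e w : ℕ)) * l + (l - 2 - (t':ℕ)) := by omega
      obtain ⟨hc, hr⟩ := div_helper (by have := t.isLt; omega) (by have := t'.isLt; omega) hh
      have hK0 : 0 < K := by rw [hK_def]; exact Fintype.card_pos_iff.mpr ⟨u⟩
      obtain ⟨hi, he⟩ := div_helper (e u).isLt (e w).isLt hc
      obtain rfl : i = j := Fin.ext hi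
      obtain rfl : u = w := e.injective (Fin.ext he)
      obtain rfl : t = t' := Fin.ext (by have := t.isLt; have := t'.isLt; omega)
      rfl
  · -- the col bound
    intro r v
    have hfin : ∀ s : Set (PW V N l), s.Finite := fun s => Set.toFinite s
    rcases v with a | i | ⟨i, u, t⟩
    · -- old vertex
      have hxinl : ∀ x ∈ Lset (plusGraph G N l) ρ' r (Sum.inl a), ∃ b : V, x = Sum.inl b := by
        rintro x ⟨hx1, -⟩
        rcases x with b | j | ⟨j, w, s⟩
        · exact ⟨b, rfl⟩
        · exfalso; simp only [hρ'def, Sum.elim_inl, Sum.elim_inr] at hx1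
          have := hM a; omega
        · exfalso; simp only [hρ'def, Sum.elim_inl, Sum.elim_inr] at hx1
          have := hM a; omega
      by_cases hr : 2 * l ≤ r
      · have hsub : Lset (plusGraph G N l) ρ' r (Sum.inl a) ⊆ Set.range Sum.inl := by
          intro x hx; obtain ⟨b, rfl⟩ := hxinl x hx; exact ⟨b, rfl⟩
        have hcard : (Lset (plusGraph G N l) ρ' r (Sum.inl a)).ncard ≤ K := by
          have := Set.ncard_le_ncard hsub (hfin _)
          rwa [ncard_range_inl] at this
        calc ((Lset (plusGraph G N l) ρ' r (Sum.inl a)).ncard : ℝ) ≤ K := by exact_mod_cast hcard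
          _ ≤ (K : ℝ) + 1 := by linarith
          _ ≤ f r := hn₀ r (by omega)
      · have hsub : Lset (plusGraph G N l) ρ' r (Sum.inl a) ⊆ Sum.inl '' (Lset G ρ r a) := by
          rintro x hx
          obtain ⟨b, rfl⟩ := hxinl x hx
          obtain ⟨hx1, p, hp, hplen, hpint⟩ := hx
          obtain ⟨q, hq1, hq2, hq3⟩ := caseInl hl hρ'l p hp (by omega) hpint
          exact ⟨b, ⟨hx1, q, hq1, le_trans hq2 hplen, hq3⟩, rfl⟩
        have hcard := Set.ncard_le_ncard hsub (hfin _)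
        rw [Set.ncard_image_of_injective _ Sum.inl_injective] at hcard
        calc ((Lset (plusGraph G N l) ρ' r (Sum.inl a)).ncard : ℝ)
            ≤ ((Lset G ρ r a).ncard : ℝ) := by exact_mod_cast hcard
          _ ≤ f r := hcol r a
    · -- hub
      by_cases hr : l ≤ r
      · have hsub : Lset (plusGraph G N l) ρ' r (hubv i) ⊆
            insert (hubv i : PW V N l) (Set.range Sum.inl) := by
          rintro x ⟨hx1, p, hp, hplen, hpint⟩
          rcases caseHub hl h1 h3 p hp hpint hx1 with rfl | ⟨b, rfl⟩
          · exact Set.mem_insert _ _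
          · exact Set.mem_insert_of_mem _ ⟨b, rfl⟩
        have hcard : (Lset (plusGraph G N l) ρ' r (hubv i)).ncard ≤ K + 1 := by
          have hc1 := Set.ncard_le_ncard hsub (hfin _)
          have hc2 := Set.ncard_insert_le (hubv i : PW V N l) (Set.range Sum.inl)
          rw [ncard_range_inl] at hc2
          omega
        calc ((Lset (plusGraph G N l) ρ' r (hubv i)).ncard : ℝ) ≤ (K : ℝ) + 1 := by
              exact_mod_cast hcard
          _ ≤ f r := hn₀ r (by omega)
      · have hsub : Lset (plusGraph G N l) ρ' r (hubv i) ⊆ {(hubv i : PW V N l)} := by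
          rintro x ⟨hx1, p, hp, hplen, hpint⟩
          rcases caseHub hl h1 h3 p hp hpint hx1 with rfl | ⟨b, rfl⟩
          · exact rfl
          · exact absurd (hub_inl_length hl p) (by omega)
        have hcard : (Lset (plusGraph G N l) ρ' r (hubv i)).ncard ≤ 1 := by
          have := Set.ncard_le_ncard hsub (hfin _)
          rwa [Set.ncard_singleton] at this
        calc ((Lset (plusGraph G N l) ρ' r (hubv i)).ncard : ℝ) ≤ 1 := by exact_mod_cast hcard
          _ ≤ f r := by linarith [hf3 r]
    · -- chain vertex
      set w₀ : PW V N l := if h : (t : ℕ) = l - 2 then Sum.inl u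
        else chv i u ⟨(t : ℕ) + 1, by have := t.isLt; omega⟩ with hw₀def
      have hsub : Lset (plusGraph G N l) ρ' r (chv i u t) ⊆
          insert (chv i u t : PW V N l) (insert (hubv i : PW V N l) {w₀}) := by
        rintro x ⟨hx1, p, hp, hplen, hpint⟩
        rcases caseChain hl h2 h3 h4 p hp hpint hx1 with rfl | rfl | ⟨ht, rfl⟩ | ⟨t', ht', rfl⟩
        · exact Set.mem_insert _ _
        · exact Set.mem_insert_of_mem _ (Set.mem_insert _ _)
        · refine Set.mem_insert_of_mem _ (Set.mem_insert_of_mem _ ?_)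
          rw [hw₀def, dif_pos ht]; rfl
        · refine Set.mem_insert_of_mem _ (Set.mem_insert_of_mem _ ?_)
          have htne : ¬ ((t : ℕ) = l - 2) := by have := t'.isLt; omega
          rw [hw₀def, dif_neg htne]
          have : t' = ⟨(t : ℕ) + 1, by have := t.isLt; omega⟩ := Fin.ext (by simp [ht'])
          rw [this]; rfl
      have hcard : (Lset (plusGraph G N l) ρ' r (chv i u t)).ncard ≤ 3 := by
        have hc1 := Set.ncard_le_ncard hsub (hfin _)
        have hc2 := Set.ncard_insert_le (chv i u t : PW V N l) (insert (hubv i) {w₀})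
        have hc3 := Set.ncard_insert_le (hubv i : PW V N l) {w₀}
        have hc4 : ({w₀} : Set (PW V N l)).ncard = 1 := Set.ncard_singleton _
        omega
      calc ((Lset (plusGraph G N l) ρ' r (chv i u t)).ncard : ℝ) ≤ 3 := by exact_mod_cast hcard
        _ ≤ f r := hf3 r
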